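/- Sinkhorn–Hadamard power rule: for X an n×n matrix with positive entries and nonzero reals a, b, P_sk(X^{∘(ab)}) = P_sk( (P_sk(X^{∘a}))^{∘b} ), where Y^{∘t} denotes the entrywise power (Y^{∘t})_{ij} = Y_{ij}^t. -/

import Mathlib

open Matrix

/-- `P` is the Sinkhorn projection of `X`: a doubly stochastic matrix of the form
`D(r) X D(c)` with positive scaling vectors. -/
def IsSinkhornProj {n : ℕ} (X P : Matrix (Fin n) (Fin n) ℝ) : Prop :=
  ∃ r c : Fin n → ℝ, (∀ i, 0 < r i) ∧ (∀ i, 0 < c i) ∧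
    P = Matrix.diagonal r * X * Matrix.diagonal c ∧
    P ∈ doublyStochastic ℝ (Fin n)

/-- Entrywise power of a matrix. -/
noncomputable def hadamardPow {n : ℕ} (X : Matrix (Fin n) (Fin n) ℝ) (t : ℝ) :
    Matrix (Fin n) (Fin n) ℝ :=
  Matrix.of fun i j => (X i j) ^ t

/-- Core uniqueness: two doubly stochastic matrices related by a positive
rank-one entrywise scaling are equal. -/
lemma ds_scaling_eq {n : ℕ} (A B : Matrix (Fin n) (Fin n) ℝ)
    (hA : A ∈ doublyStochastic ℝ (Fin n)) (hB : B ∈ doublyStochastic ℝ (Fin n))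
    (hBpos : ∀ i j, 0 < B i j) (u v : Fin n → ℝ)
    (hu : ∀ i, 0 < u i) (hv : ∀ j, 0 < v j)
    (h : ∀ i j, A i j = u i * B i j * v j) : A = B := by
  rcases Nat.eq_zero_or_pos n with hn | hn
  · subst hn; ext i j; exact absurd i.2 (by omega)
  have : Nonempty (Fin n) := ⟨⟨0, hn⟩⟩
  obtain ⟨i0, -, hi0⟩ := Finset.exists_max_image Finset.univ u Finset.univ_nonempty
  set M := u i0 with hM
  have hMpos : 0 < M := hu i0
  -- Step 1: M * v j ≥ 1 for all j
  have hv1 : ∀ j, 1 ≤ M * v j := by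
    intro j
    have hcol : ∑ i, A i j = 1 := sum_col_of_mem_doublyStochastic hA j
    have hle : ∑ i, A i j ≤ ∑ i, M * B i j * v j := by
      apply Finset.sum_le_sum
      intro i _
      rw [h i j]
      have h1 := hi0 i (Finset.mem_univ i)
      rw [mul_assoc, mul_assoc]
      exact mul_le_mul_of_nonneg_right h1 (mul_nonneg (hBpos i j).le (hv j).le)
    have : (1 : ℝ) ≤ M * v j * ∑ i, B i j := by
      rw [Finset.mul_sum]
      calc (1:ℝ) = ∑ i, A i j := hcol.symm
        _ ≤ ∑ i, M * B i j * v j := hle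
        _ = ∑ i, M * v j * B i j := by apply Finset.sum_congr rfl; intros; ring
    rwa [sum_col_of_mem_doublyStochastic hB j, mul_one] at this
  -- Step 2: M * v j = 1 for all j
  have hv2 : ∀ j, M * v j = 1 := by
    have hrow : ∑ j, A i0 j = 1 := sum_row_of_mem_doublyStochastic hA i0
    have hle : ∀ j ∈ Finset.univ, B i0 j ≤ A i0 j := by
      intro j _
      rw [h i0 j]
      have := hv1 j
      nlinarith [hBpos i0 j]
    have hsums : ∑ j, B i0 j = ∑ j, A i0 j := by
      rw [hrow, sum_row_of_mem_doublyStochastic hB i0]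
    have := (Finset.sum_eq_sum_iff_of_le hle).mp hsums
    intro j
    have hj := (this j (Finset.mem_univ j)).symm
    rw [h i0 j] at hj
    have hB' := (hBpos i0 j).ne'
    have : M * v j * B i0 j = 1 * B i0 j := by rw [one_mul]; linarith [hj]
    exact mul_right_cancel₀ hB' this
  -- Step 3: u i = M for all i
  have hu2 : ∀ i, u i = M := by
    intro i
    by_contra hne
    have hlt : u i < M := lt_of_le_of_ne (hi0 i (Finset.mem_univ i)) hne
    obtain ⟨j⟩ := ‹Nonempty (Fin n)›
    have hcol : ∑ k, A k j = 1 := sum_col_of_mem_doublyStochastic hA j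
    have hle : ∀ k ∈ Finset.univ, A k j ≤ B k j := by
      intro k _
      rw [h k j]
      have h1 : u k * v j ≤ M * v j := by
        have := hi0 k (Finset.mem_univ k); nlinarith [hv j]
      rw [hv2 j] at h1
      nlinarith [hBpos k j]
    have hstrict : A i j < B i j := by
      rw [h i j]
      have h1 : u i * v j < M * v j := by nlinarith [hv j]
      rw [hv2 j] at h1
      nlinarith [hBpos i j]
    have : ∑ k, A k j < ∑ k, B k j :=
      Finset.sum_lt_sum hle ⟨i, Finset.mem_univ i, hstrict⟩
    rw [hcol, sum_col_of_mem_doublyStochastic hB j] at this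
    exact lt_irrefl 1 this
  ext i j
  rw [h i j, hu2 i]
  have := hv2 j
  nlinarith [hBpos i j]

theorem stmt7 {n : ℕ} (X : Matrix (Fin n) (Fin n) ℝ) (a b : ℝ)
    (hX : ∀ i j, 0 < X i j) (ha : a ≠ 0) (hb : b ≠ 0)
    (P Pa Q : Matrix (Fin n) (Fin n) ℝ)
    (hP : IsSinkhornProj (hadamardPow X (a * b)) P)
    (hPa : IsSinkhornProj (hadamardPow X a) Pa)
    (hQ : IsSinkhornProj (hadamardPow Pa b) Q) :
    P = Q := by
  obtain ⟨r, c, hr, hc, hPeq, hPds⟩ := hP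
  obtain ⟨r1, c1, hr1, hc1, hPaeq, hPads⟩ := hPa
  obtain ⟨s, d, hs, hd, hQeq, hQds⟩ := hQ
  -- entries
  have hXab : ∀ i j, 0 < (hadamardPow X (a*b)) i j := fun i j =>
    Real.rpow_pos_of_pos (hX i j) _
  have hPa_entry : ∀ i j, Pa i j = r1 i * X i j ^ a * c1 j := by
    intro i j
    rw [hPaeq]
    simp [Matrix.mul_apply, Matrix.diagonal, hadamardPow, Finset.sum_mul,
      Matrix.mul_diagonal, Matrix.diagonal_mul]
  have hP_entry : ∀ i j, P i j = r i * X i j ^ (a*b) * c j := by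
    intro i j
    rw [hPeq]
    simp [hadamardPow, Matrix.mul_diagonal, Matrix.diagonal_mul]
  have hQ_entry : ∀ i j, Q i j = s i * (Pa i j) ^ b * d j := by
    intro i j
    rw [hQeq]
    simp [hadamardPow, Matrix.mul_diagonal, Matrix.diagonal_mul]
  have hPpos : ∀ i j, 0 < P i j := by
    intro i j
    rw [hP_entry i j]
    exact mul_pos (mul_pos (hr i) (Real.rpow_pos_of_pos (hX i j) _)) (hc j)
  -- Q i j = u i * P i j * v j
  set u : Fin n → ℝ := fun i => s i * (r1 i) ^ b / r i with hu_def
  set v : Fin n → ℝ := fun j => (c1 j) ^ b * d j / c j with hv_def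
  have hu : ∀ i, 0 < u i :=
    fun i => div_pos (mul_pos (hs i) (Real.rpow_pos_of_pos (hr1 i) _)) (hr i)
  have hv : ∀ j, 0 < v j :=
    fun j => div_pos (mul_pos (Real.rpow_pos_of_pos (hc1 j) _) (hd j)) (hc j)
  have key : ∀ i j, Q i j = u i * P i j * v j := by
    intro i j
    rw [hQ_entry i j, hPa_entry i j, hP_entry i j]
    have h1 : (r1 i * X i j ^ a * c1 j) ^ b = r1 i ^ b * (X i j ^ a) ^ b * c1 j ^ b := by
      rw [Real.mul_rpow (mul_nonneg (hr1 i).le (Real.rpow_pos_of_pos (hX i j) a).le) (hc1 j).le,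
        Real.mul_rpow (hr1 i).le (Real.rpow_pos_of_pos (hX i j) a).le]
    have h2 : (X i j ^ a) ^ b = X i j ^ (a * b) := (Real.rpow_mul (hX i j).le a b).symm
    rw [h1, h2, hu_def, hv_def]
    have hri : r i ≠ 0 := (hr i).ne'
    have hcj : c j ≠ 0 := (hc j).ne'
    field_simp
  exact (ds_scaling_eq Q P hQds hPds hPpos u v hu hv key).symm
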